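/- For any real number β > 0, the set {(μ_{00}, μ_{01}, μ_{10}, μ_{11}) ∈ ℝ⁴ : μ_{jk} ≥ 0, μ_{00}+μ_{01}+μ_{10}+μ_{11} = 1, βμ_{00} ≥ μ_{10}, βμ_{01} ≤ μ_{11}} is equal to the convex hull (a tetrahedron) of the four points E = (1,0,0,0), F = (1/(1+β), 0, β/(1+β), 0), G = (0,0,0,1), and H = (0, 1/(1+β), 0, β/(1+β)). -/

import Mathlib

/-- for `β > 0`, the set of probability vectors
`μ = (μ₀₀, μ₀₁, μ₁₀, μ₁₁)` satisfying `βμ₀₀ ≥ μ₁₀` and `βμ₀₁ ≤ μ₁₁` (the set of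
CPT correlated equilibria of a 2×2 game in which player 1's strategies are
equivalent and player 2 has no dominated strategy) is the tetrahedron with
vertices `E = (1,0,0,0)`, `F = (1/(1+β), 0, β/(1+β), 0)`, `G = (0,0,0,1)` and
`H = (0, 1/(1+β), 0, β/(1+β))`. -/
theorem equivalent_strategies_tetrahedron (β : ℝ) (hβ : 0 < β) :
    {μ : Fin 4 → ℝ | (∀ j, 0 ≤ μ j) ∧ μ 0 + μ 1 + μ 2 + μ 3 = 1 ∧
        μ 2 ≤ β * μ 0 ∧ β * μ 1 ≤ μ 3}
      = convexHull ℝ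
          ({![(1 : ℝ), 0, 0, 0], ![1 / (1 + β), 0, β / (1 + β), 0],
            ![(0 : ℝ), 0, 0, 1], ![(0 : ℝ), 1 / (1 + β), 0, β / (1 + β)]}
            : Set (Fin 4 → ℝ)) := by
  have hβ1 : (0:ℝ) < 1 + β := by linarith
  have hβ1' : (1:ℝ) + β ≠ 0 := ne_of_gt hβ1
  set S : Set (Fin 4 → ℝ) := {μ : Fin 4 → ℝ | (∀ j, 0 ≤ μ j) ∧
      μ 0 + μ 1 + μ 2 + μ 3 = 1 ∧ μ 2 ≤ β * μ 0 ∧ β * μ 1 ≤ μ 3} with hS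
  apply le_antisymm
  · -- S ⊆ convexHull
    intro μ hμ
    obtain ⟨hpos, hsum, h1, h2⟩ := hμ
    set z : Fin 4 → (Fin 4 → ℝ) := ![![(1 : ℝ), 0, 0, 0],
      ![1 / (1 + β), 0, β / (1 + β), 0], ![(0 : ℝ), 0, 0, 1],
      ![(0 : ℝ), 1 / (1 + β), 0, β / (1 + β)]] with hz
    set w : Fin 4 → ℝ := ![μ 0 - μ 2 / β, (1 + β) * μ 2 / β,
      μ 3 - β * μ 1, (1 + β) * μ 1] with hw
    have hw0 : ∀ i ∈ (Finset.univ : Finset (Fin 4)), 0 ≤ w i := by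
      intro i _
      have p1 := hpos 1; have p2 := hpos 2
      fin_cases i <;> simp [hw]
      · rw [div_le_iff₀ hβ]; linarith
      · exact div_nonneg (mul_nonneg hβ1.le p2) hβ.le
      · linarith
      · exact mul_nonneg hβ1.le p1
    have hwsum : ∑ i, w i = 1 := by
      simp [hw, Fin.sum_univ_four]
      field_simp
      linear_combination β * hsum
    have hmem : ∀ i ∈ (Finset.univ : Finset (Fin 4)), z i ∈
        ({![(1 : ℝ), 0, 0, 0], ![1 / (1 + β), 0, β / (1 + β), 0],
          ![(0 : ℝ), 0, 0, 1], ![(0 : ℝ), 1 / (1 + β), 0, β / (1 + β)]}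
          : Set (Fin 4 → ℝ)) := by
      intro i _
      fin_cases i <;> simp [hz]
    have := Finset.centerMass_mem_convexHull Finset.univ hw0
      (by rw [hwsum]; norm_num) hmem
    have hcm : Finset.univ.centerMass w z = μ := by
      rw [Finset.centerMass_eq_of_sum_1 _ _ hwsum]
      funext j
      simp only [Fin.sum_univ_four, hw, hz]
      fin_cases j <;>
        simp [Pi.add_apply, Pi.smul_apply, smul_eq_mul] <;> field_simp <;> ring
    rwa [hcm] at this
  · -- convexHull ⊆ S
    apply convexHull_min
    · intro x hx
      simp only [Set.mem_insert_iff, Set.mem_singleton_iff] at hx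
      rcases hx with h | h | h | h <;> subst h <;>
        refine ⟨?_, ?_, ?_, ?_⟩ <;>
        first
          | (intro j; fin_cases j <;> simp <;> positivity)
          | (simp; field_simp <;> norm_num)
          | (simp; positivity)
          | simp
    · intro x hx y hy a b ha hb hab
      obtain ⟨hx0, hx1, hx2, hx3⟩ := hx
      obtain ⟨hy0, hy1, hy2, hy3⟩ := hy
      refine ⟨?_, ?_, ?_, ?_⟩
      · intro j
        simp only [Pi.add_apply, Pi.smul_apply, smul_eq_mul]
        have := hx0 j; have := hy0 j
        nlinarith
      · simp only [Pi.add_apply, Pi.smul_apply, smul_eq_mul]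
        nlinarith
      · simp only [Pi.add_apply, Pi.smul_apply, smul_eq_mul]
        nlinarith
      · simp only [Pi.add_apply, Pi.smul_apply, smul_eq_mul]
        nlinarith
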